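/- Assume quasi-symmetry. Let ξ be a nonzero linear functional on ℝ^k and F_ξ = {x∈∇ : ξ(x) = max_{y∈∇} ξ(y)} the face of ∇ exposed by ξ. Then the affine hull of F_ξ satisfies Aff(F_ξ) = (1/2)∑_{i : ξ(β_i)>0} β_i − C_0, where C_0 is the convex cone generated by {β_i : ξ(β_i) = 0}; moreover C_0 equals the linear span of {β_i : ξ(β_i) = 0}. -/
import Mathlib


open Pointwise
open scoped Classical

noncomputable section

/-- The zonotope `∇ = (1/2)∑_i [0, β_i]`. -/
def nabla {N k : ℕ} (β : Fin N → (Fin k → ℝ)) : Set (Fin k → ℝ) :=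
  (2⁻¹ : ℝ) • ∑ i : Fin N, segment ℝ 0 (β i)

/-- The face `F_ξ` of `∇` exposed by the linear functional `ξ`. -/
def exposedFace {N k : ℕ} (β : Fin N → (Fin k → ℝ))
    (ξ : (Fin k → ℝ) →ₗ[ℝ] ℝ) : Set (Fin k → ℝ) :=
  {x ∈ nabla β | ∀ y ∈ nabla β, ξ y ≤ ξ x}

/-- The convex cone `C₀` generated by `{β_i : ξ(β_i) = 0}`. -/
def coneZero {N k : ℕ} (β : Fin N → (Fin k → ℝ))
    (ξ : (Fin k → ℝ) →ₗ[ℝ] ℝ) : Set (Fin k → ℝ) :=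
  {y | ∃ c : Fin N → ℝ, (∀ i, 0 ≤ c i) ∧ (∀ i, ξ (β i) ≠ 0 → c i = 0) ∧
    y = ∑ i, c i • β i}

lemma mem_segment_zero {k : ℕ} {b y : Fin k → ℝ} :
    y ∈ segment ℝ (0 : Fin k → ℝ) b ↔ ∃ t ∈ Set.Icc (0:ℝ) 1, y = t • b := by
  rw [segment_eq_image]
  simp [eq_comm]

lemma mem_nabla_iff {N k : ℕ} {β : Fin N → (Fin k → ℝ)} {x : Fin k → ℝ} :
    x ∈ nabla β ↔ ∃ t : Fin N → ℝ, (∀ i, t i ∈ Set.Icc (0:ℝ) 1) ∧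
      x = (2⁻¹ : ℝ) • ∑ i, t i • β i := by
  unfold nabla
  rw [Set.mem_smul_set]
  constructor
  · rintro ⟨z, hz, rfl⟩
    rw [Set.mem_fintype_sum] at hz
    obtain ⟨g, hg, rfl⟩ := hz
    choose t ht hgt using fun i => mem_segment_zero.mp (hg i)
    exact ⟨t, ht, by rw [Finset.sum_congr rfl fun i _ => hgt i]⟩
  · rintro ⟨t, ht, rfl⟩
    refine ⟨∑ i, t i • β i, ?_, rfl⟩
    rw [Set.mem_fintype_sum]
    exact ⟨fun i => t i • β i, fun i => mem_segment_zero.mpr ⟨t i, ht i, rfl⟩, rfl⟩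

section aux

variable {N k : ℕ} {β : Fin N → (Fin k → ℝ)} {ξ : (Fin k → ℝ) →ₗ[ℝ] ℝ}

lemma xi_apply (t : Fin N → ℝ) :
    ξ ((2⁻¹ : ℝ) • ∑ i, t i • β i) = 2⁻¹ * ∑ i, t i * ξ (β i) := by
  rw [map_smul, map_sum, smul_eq_mul]
  simp [map_smul, smul_eq_mul]

lemma term_le {t : Fin N → ℝ} (ht : ∀ i, t i ∈ Set.Icc (0:ℝ) 1) (i : Fin N) :
    t i * ξ (β i) ≤ if 0 < ξ (β i) then ξ (β i) else 0 := by
  obtain ⟨h0, h1⟩ := ht i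
  split_ifs with h
  · nlinarith
  · push_neg at h; nlinarith

lemma sum_le {t : Fin N → ℝ} (ht : ∀ i, t i ∈ Set.Icc (0:ℝ) 1) :
    ∑ i, t i * ξ (β i) ≤
      ∑ i ∈ Finset.univ.filter (fun i => 0 < ξ (β i)), ξ (β i) := by
  rw [Finset.sum_filter]
  exact Finset.sum_le_sum fun i _ => term_le ht i

/-- membership in the exposed face for suitable coefficients -/
lemma mem_face {t : Fin N → ℝ} (ht : ∀ i, t i ∈ Set.Icc (0:ℝ) 1)
    (hpos : ∀ i, 0 < ξ (β i) → t i = 1) (hneg : ∀ i, ξ (β i) < 0 → t i = 0) :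
    (2⁻¹ : ℝ) • ∑ i, t i • β i ∈ exposedFace β ξ := by
  have hteq : ∀ i, t i * ξ (β i) = if 0 < ξ (β i) then ξ (β i) else 0 := by
    intro i
    rcases lt_trichotomy (ξ (β i)) 0 with h | h | h
    · rw [hneg i h, if_neg (by linarith)]; ring
    · simp [h]
    · rw [hpos i h, if_pos h]; ring
  refine ⟨mem_nabla_iff.mpr ⟨t, ht, rfl⟩, ?_⟩
  intro y hy
  obtain ⟨s, hs, rfl⟩ := mem_nabla_iff.mp hy
  rw [xi_apply, xi_apply]
  have h1 := sum_le (β := β) (ξ := ξ) hs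
  have h2 : ∑ i, t i * ξ (β i)
      = ∑ i ∈ Finset.univ.filter (fun i => 0 < ξ (β i)), ξ (β i) := by
    rw [Finset.sum_filter]
    exact Finset.sum_congr rfl fun i _ => hteq i
  rw [h2]
  linarith

end aux


/-- **Lemma.** Under quasi-symmetry, the affine hull of the exposed face `F_ξ` is
`Aff(F_ξ) = (1/2)∑_{ξ(β_i)>0} β_i − C₀`, where `C₀` is the convex cone generated
by `{β_i : ξ(β_i) = 0}`, and moreover `C₀` equals the linear span of that set. -/
theorem affine_hull_of_exposed_face
    {N k : ℕ} (hk : 1 ≤ k) (hNk : k ≤ N)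
    (μ : (Fin N → ℝ) →ₗ[ℝ] (Fin k → ℝ))
    (hsurj : Function.Surjective μ)
    (β : Fin N → (Fin k → ℝ)) (hβ : ∀ i, β i = μ (Pi.single i 1))
    (hβ0 : ∀ i, β i ≠ 0)
    (hspan : Submodule.span ℝ (Set.range β) = ⊤)
    (hqs : ∀ L : Submodule ℝ (Fin k → ℝ), Module.finrank ℝ L = 1 →
      ∑ i ∈ Finset.univ.filter (fun i => β i ∈ L), β i = 0)
    (ξ : (Fin k → ℝ) →ₗ[ℝ] ℝ) (hξ : ξ ≠ 0) :
    ((affineSpan ℝ (exposedFace β ξ) : Set (Fin k → ℝ)) =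
      {x | ∃ c ∈ coneZero β ξ,
        x = (2⁻¹ : ℝ) • (∑ i ∈ Finset.univ.filter (fun i => 0 < ξ (β i)), β i) - c}) ∧
    coneZero β ξ =
      (Submodule.span ℝ {x | ∃ i, ξ (β i) = 0 ∧ β i = x} : Set (Fin k → ℝ)) := by
  set S : Set (Fin k → ℝ) := {x | ∃ i, ξ (β i) = 0 ∧ β i = x} with hS
  set C : Set (Fin k → ℝ) := coneZero β ξ with hCdef
  -- basic closure properties of the cone
  have hzero : (0 : Fin k → ℝ) ∈ C :=
    ⟨0, fun i => le_refl 0, fun i _ => rfl, by simp⟩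
  have hadd : ∀ x ∈ C, ∀ y ∈ C, x + y ∈ C := by
    rintro x ⟨c, hc0, hcz, rfl⟩ y ⟨d, hd0, hdz, rfl⟩
    refine ⟨c + d, fun i => add_nonneg (hc0 i) (hd0 i),
      fun i hi => by simp [hcz i hi, hdz i hi], ?_⟩
    rw [← Finset.sum_add_distrib]
    exact Finset.sum_congr rfl fun i _ => by simp [add_smul]
  have hsmul : ∀ r : ℝ, 0 ≤ r → ∀ x ∈ C, r • x ∈ C := by
    rintro r hr x ⟨c, hc0, hcz, rfl⟩
    refine ⟨r • c, fun i => mul_nonneg hr (hc0 i),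
      fun i hi => by simp [hcz i hi], ?_⟩
    rw [Finset.smul_sum]
    exact Finset.sum_congr rfl fun i _ => by simp [smul_smul]
  have hgen : ∀ i, ξ (β i) = 0 → β i ∈ C := by
    intro i hi
    refine ⟨fun j => if j = i then 1 else 0, fun j => by positivity,
      fun j hj => ?_, ?_⟩
    · rcases eq_or_ne j i with rfl | h
      · exact absurd hi hj
      · simp [h]
    · simp [ite_smul]
  -- quasi-symmetry gives -β i in the cone
  have hneggen : ∀ i, ξ (β i) = 0 → -β i ∈ C := by
    intro i hi
    set L : Submodule ℝ (Fin k → ℝ) := Submodule.span ℝ {β i} with hL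
    have hrank : Module.finrank ℝ L = 1 := finrank_span_singleton (hβ0 i)
    have hsum := hqs L hrank
    set F : Finset (Fin N) := Finset.univ.filter (fun j => β j ∈ L) with hF
    have hiF : i ∈ F := by
      simp only [hF, Finset.mem_filter, Finset.mem_univ, true_and]
      exact Submodule.mem_span_singleton_self _
    have hzeroL : ∀ j ∈ F, ξ (β j) = 0 := by
      intro j hj
      simp only [hF, Finset.mem_filter] at hj
      obtain ⟨r, hr⟩ := Submodule.mem_span_singleton.mp hj.2
      rw [← hr, map_smul, smul_eq_mul, hi, mul_zero]
    have key : -β i = ∑ j ∈ F.erase i, β j := by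
      have h := Finset.add_sum_erase F β hiF
      rw [hsum] at h
      exact neg_eq_of_add_eq_zero_right h
    rw [key]
    refine ⟨fun j => if j ∈ F.erase i then 1 else 0, fun j => by positivity,
      fun j hj => ?_, ?_⟩
    · by_cases h : j ∈ F.erase i
      · exact absurd (hzeroL j (Finset.mem_of_mem_erase h)) hj
      · simp [h]
    · simp only [ite_smul, one_smul, zero_smul]
      rw [Finset.sum_ite_mem, Finset.univ_inter]
  -- the cone is closed under negation
  have hsumC : ∀ (s : Finset (Fin N)) (f : Fin N → (Fin k → ℝ)),
      (∀ j ∈ s, f j ∈ C) → ∑ j ∈ s, f j ∈ C := by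
    intro s f hf
    exact Finset.sum_induction f (· ∈ C) (fun a b ha hb => hadd a ha b hb) hzero hf
  have hneg : ∀ x ∈ C, -x ∈ C := by
    rintro x ⟨c, hc0, hcz, rfl⟩
    rw [← Finset.sum_neg_distrib]
    refine hsumC _ _ fun j _ => ?_
    rcases eq_or_ne (c j) 0 with h | h
    · simpa [h] using hzero
    · have hz : ξ (β j) = 0 := by
        by_contra hcon
        exact h (hcz j hcon)
      rw [← smul_neg]
      exact hsmul _ (hc0 j) _ (hneggen j hz)
  -- C as a submodule
  set M : Submodule ℝ (Fin k → ℝ) :=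
    { carrier := C
      add_mem' := fun {x y} hx hy => hadd x hx y hy
      zero_mem' := hzero
      smul_mem' := by
        intro r x hx
        rcases le_or_gt 0 r with hr | hr
        · exact hsmul r hr x hx
        · have : r • x = -((-r) • x) := by rw [neg_smul, neg_neg]
          rw [this]
          exact hneg _ (hsmul (-r) (by linarith) x hx) } with hM
  -- part 2 : C = span S
  have hCspan : C = (Submodule.span ℝ S : Set (Fin k → ℝ)) := by
    apply Set.Subset.antisymm
    · rintro x ⟨c, hc0, hcz, rfl⟩
      refine Submodule.sum_mem _ fun j _ => ?_
      rcases eq_or_ne (c j) 0 with h | h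
      · simp [h]
      · have hz : ξ (β j) = 0 := by
          by_contra hcon
          exact h (hcz j hcon)
        exact Submodule.smul_mem _ _ (Submodule.subset_span ⟨j, hz, rfl⟩)
    · have : Submodule.span ℝ S ≤ M := by
        rw [Submodule.span_le]
        rintro x ⟨j, hj, rfl⟩
        exact hgen j hj
      exact this
  refine ⟨?_, hCspan⟩
  set P : Finset (Fin N) := Finset.univ.filter (fun i => 0 < ξ (β i)) with hP
  set b : Fin k → ℝ := (2⁻¹ : ℝ) • ∑ i ∈ P, β i with hb
  -- b is in the face
  have hbrep : b = (2⁻¹ : ℝ) • ∑ i, (if 0 < ξ (β i) then (1:ℝ) else 0) • β i := by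
    rw [hb]
    congr 1
    rw [hP, Finset.sum_filter]
    exact Finset.sum_congr rfl fun i _ => by split_ifs <;> simp
  have hbF : b ∈ exposedFace β ξ := by
    rw [hbrep]
    refine mem_face (fun i => ?_) (fun i h => by simp [h]) (fun i h => ?_)
    · split_ifs <;> constructor <;> norm_num
    · rw [if_neg (by linarith)]
  have hξb : ξ b = 2⁻¹ * ∑ i ∈ P, ξ (β i) := by
    rw [hb, map_smul, map_sum, smul_eq_mul]
  -- span S is contained in the direction of the affine span of the face
  have hsubdir : Submodule.span ℝ S ≤ (affineSpan ℝ (exposedFace β ξ)).direction := by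
    rw [Submodule.span_le]
    rintro x ⟨i, hi0, rfl⟩
    set t' : Fin N → ℝ := fun j => if 0 < ξ (β j) then 1 else if j = i then 1 else 0
      with ht'
    have ht'sum : ∑ j, t' j • β j = (∑ j ∈ P, β j) + β i := by
      have hterm : ∀ j, t' j • β j =
          (if 0 < ξ (β j) then (1:ℝ) else 0) • β j + (if j = i then (1:ℝ) else 0) • β j := by
        intro j
        by_cases h1 : 0 < ξ (β j)
        · by_cases h2 : j = i
          · subst h2; rw [hi0] at h1; exact absurd h1 (lt_irrefl 0)
          · simp [ht', h1, h2]
        · by_cases h2 : j = i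
          · subst h2; simp [ht', h1]
          · simp [ht', h1, h2]
      rw [Finset.sum_congr rfl fun j _ => hterm j, Finset.sum_add_distrib]
      congr 1
      · simp only [ite_smul, one_smul, zero_smul]
        rw [hP, Finset.sum_filter]
      · simp [ite_smul]
    have hp2 : (2⁻¹ : ℝ) • ∑ j, t' j • β j ∈ exposedFace β ξ := by
      refine mem_face (fun j => ?_) (fun j h => by simp [ht', h]) (fun j h => ?_)
      · simp only [ht']
        split_ifs <;> constructor <;> norm_num
      · simp only [ht']
        rw [if_neg (by linarith), if_neg]
        rintro rfl
        rw [hi0] at h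
        exact absurd h (lt_irrefl 0)
    have hd := AffineSubspace.vsub_mem_direction
      ((subset_affineSpan ℝ _) hp2) ((subset_affineSpan ℝ _) hbF)
    have hval : ((2⁻¹ : ℝ) • ∑ j, t' j • β j) -ᵥ b = (2⁻¹ : ℝ) • β i := by
      rw [ht'sum, hb, vsub_eq_sub, smul_add]
      abel
    rw [hval] at hd
    have : β i = (2 : ℝ) • ((2⁻¹ : ℝ) • β i) := by
      rw [smul_smul]; norm_num
    rw [this]
    exact Submodule.smul_mem _ _ hd
  -- identify the RHS as a coset
  have hRHS : {x | ∃ c ∈ C, x = b - c}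
      = (AffineSubspace.mk' b (Submodule.span ℝ S) : Set (Fin k → ℝ)) := by
    ext x
    simp only [Set.mem_setOf_eq, SetLike.mem_coe, AffineSubspace.mem_mk',
      vsub_eq_sub]
    constructor
    · rintro ⟨c, hc, rfl⟩
      rw [hCspan] at hc
      have : b - c - b = -c := by abel
      rw [this]
      exact Submodule.neg_mem _ hc
    · intro h
      refine ⟨b - x, ?_, by abel⟩
      rw [hCspan]
      have : b - x = -(x - b) := by abel
      rw [this]
      exact Submodule.neg_mem _ h
  rw [hRHS]
  apply Set.Subset.antisymm
  · -- affine span of the face is contained in the coset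
    have : affineSpan ℝ (exposedFace β ξ) ≤ AffineSubspace.mk' b (Submodule.span ℝ S) := by
      rw [affineSpan_le]
      rintro x ⟨hxN, hxmax⟩
      obtain ⟨t, ht, rfl⟩ := mem_nabla_iff.mp hxN
      simp only [SetLike.mem_coe, AffineSubspace.mem_mk', vsub_eq_sub]
      have hle : ξ ((2⁻¹ : ℝ) • ∑ i, t i • β i) ≤ ξ b := by
        rw [xi_apply, hξb]
        have := sum_le (β := β) (ξ := ξ) ht
        rw [hP]
        linarith
      have heq : ξ ((2⁻¹ : ℝ) • ∑ i, t i • β i) = ξ b :=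
        le_antisymm hle (hxmax b hbF.1)
      rw [xi_apply, hξb, hP, Finset.sum_filter] at heq
      have hsums : ∑ i, t i * ξ (β i) = ∑ i, if 0 < ξ (β i) then ξ (β i) else 0 :=
        mul_left_cancel₀ (by norm_num : (2⁻¹:ℝ) ≠ 0) heq
      have hteq : ∀ i, t i * ξ (β i) = if 0 < ξ (β i) then ξ (β i) else 0 := by
        have := (Finset.sum_eq_sum_iff_of_le
          (fun i _ => term_le (β := β) (ξ := ξ) ht i)).mp hsums
        exact fun i => this i (Finset.mem_univ i)
      have hdiff : (2⁻¹ : ℝ) • ∑ i, t i • β i - b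
          = (2⁻¹ : ℝ) • ∑ i, (t i • β i - (if 0 < ξ (β i) then β i else 0)) := by
        rw [hb, hP, Finset.sum_filter, Finset.sum_sub_distrib, smul_sub]
      rw [hdiff]
      refine Submodule.smul_mem _ _ (Submodule.sum_mem _ fun i _ => ?_)
      rcases lt_trichotomy (ξ (β i)) 0 with h | h | h
      · have hti : t i = 0 := by
          have := hteq i
          rw [if_neg (by linarith)] at this
          exact (mul_eq_zero.mp this).resolve_right (ne_of_lt h)
        rw [hti, if_neg (by linarith)]
        simp
      · rw [if_neg (by rw [h]; exact lt_irrefl 0), sub_zero]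
        exact Submodule.smul_mem _ _ (Submodule.subset_span ⟨i, h, rfl⟩)
      · have hti : t i = 1 := by
          have h2 := hteq i
          rw [if_pos h] at h2
          have h3 : (t i - 1) * ξ (β i) = 0 := by ring_nf; linarith
          rcases mul_eq_zero.mp h3 with h' | h'
          · linarith
          · exact absurd h' (ne_of_gt h)
        rw [hti, if_pos h, one_smul, sub_self]
        exact Submodule.zero_mem _
    exact this
  · -- the coset is contained in the affine span
    intro x hx
    rw [SetLike.mem_coe, AffineSubspace.mem_mk'] at hx
    have hxmem : x = (x -ᵥ b) +ᵥ b := (vsub_vadd x b).symm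
    rw [hxmem]
    exact AffineSubspace.vadd_mem_of_mem_direction (hsubdir hx)
      ((subset_affineSpan ℝ _) hbF)
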